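/- arXiv:1702.01876 — 2 statements merged into one kernel-verified Lean document; each statement's English description precedes it below -/
import Mathlib

section
/- Let s ∈ W be an involution. For λ ∈ V set μ := {λ + s(λ)} and g(λ) := 2⟨{μ − ρ} − (μ − ρ), ρ⟩. Then for every λ ∈ V one has 0 ≤ g(λ) ≤ ‖2ρ‖². -/
open scoped RealInnerProductSpace

noncomputable section

/-- The pairing `⟨v, a∨⟩ = 2⟪v,a⟫/⟪a,a⟫` of `v` against the coroot of `a`. -/
def copair {V : Type*} [NormedAddCommGroup V] [InnerProductSpace ℝ V] (v a : V) : ℝ :=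
  2 * ⟪v, a⟫ / ⟪a, a⟫

/-- The orthogonal reflection `s_a` in the hyperplane orthogonal to `a`,
as a linear isometry of `V`. -/
def sRefl {V : Type*} [NormedAddCommGroup V] [InnerProductSpace ℝ V] [FiniteDimensional ℝ V]
    (a : V) : V ≃ₗᵢ[ℝ] V :=
  Submodule.reflection (ℝ ∙ a)ᗮ

/-- A finite crystallographic reduced root system `Φ` spanning a finite-dimensional real inner
product space `V`, together with a choice of positive roots `pos`, simple roots `sroot`,
and fundamental weights `fw`. -/
structure RootSystemCtx (V : Type*) [NormedAddCommGroup V] [InnerProductSpace ℝ V]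
    [FiniteDimensional ℝ V] where
  l : ℕ
  Φ : Finset V
  pos : Finset V
  sroot : Fin l → V
  fw : Fin l → V
  nonzero : ∀ a ∈ Φ, a ≠ (0 : V)
  span_top : Submodule.span ℝ (Φ : Set V) = ⊤
  reduced : ∀ a ∈ Φ, ∀ t : ℝ, t • a ∈ Φ → t = 1 ∨ t = -1
  refl_mem : ∀ a ∈ Φ, ∀ b ∈ Φ, sRefl a b ∈ Φ
  crystal : ∀ a ∈ Φ, ∀ b ∈ Φ, ∃ n : ℤ, copair b a = (n : ℝ)
  pos_subset : pos ⊆ Φ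
  mem_pos_or : ∀ a ∈ Φ, (a ∈ pos ∧ -a ∉ pos) ∨ (a ∉ pos ∧ -a ∈ pos)
  sroot_mem : ∀ i, sroot i ∈ pos
  sroot_indep : LinearIndependent ℝ sroot
  pos_nat_comb : ∀ a ∈ pos, ∃ c : Fin l → ℕ, a = ∑ i, (c i : ℝ) • sroot i
  fw_pairing : ∀ i j, copair (fw i) (sroot j) = if i = j then 1 else 0

namespace RootSystemCtx

variable {V : Type*} [NormedAddCommGroup V] [InnerProductSpace ℝ V] [FiniteDimensional ℝ V]
variable (R : RootSystemCtx V)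

/-- The half sum of the positive roots, `ρ = Σ_i ϖ_i`. -/
def rho : V := ∑ i, R.fw i

/-- The Weyl group `W`, the subgroup of the isometry group of `V` generated by the
reflections in the roots. -/
def weylGroup : Subgroup (V ≃ₗᵢ[ℝ] V) :=
  Subgroup.closure {g | ∃ a ∈ R.Φ, g = sRefl a}

/-- `γ` is an expression of `w` as a product of simple reflections. -/
def IsExpression (w : V ≃ₗᵢ[ℝ] V) (γ : List (Fin R.l)) : Prop :=
  w = (γ.map fun i => sRefl (R.sroot i)).prod

/-- `γ` is a reduced expression of `w`: an expression of minimal possible length. -/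
def IsReducedExpression (w : V ≃ₗᵢ[ℝ] V) (γ : List (Fin R.l)) : Prop :=
  R.IsExpression w γ ∧ ∀ γ' : List (Fin R.l), R.IsExpression w γ' → γ.length ≤ γ'.length

/-- A weight is dominant if it pairs nonnegatively with every simple coroot. -/
def IsDominant (v : V) : Prop := ∀ i, 0 ≤ copair v (R.sroot i)

/-- `d` is the dominant representative `{v}` of the Weyl group orbit of `v`. -/
def IsDomRep (v d : V) : Prop := R.IsDominant d ∧ ∃ w ∈ R.weylGroup, w v = d

end RootSystemCtx


section Aux
attribute [local instance] Classical.propDecidable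
set_option linter.unusedSectionVars false

open Finset

variable {V : Type*} [NormedAddCommGroup V] [InnerProductSpace ℝ V] [FiniteDimensional ℝ V]

lemma sRefl_apply (a x : V) : sRefl a x = x - copair x a • a := by
  rw [sRefl, Submodule.reflection_orthogonal_apply, Submodule.reflection_singleton_apply, copair,
    real_inner_self_eq_norm_sq, real_inner_comm, two_smul]
  simp only [RCLike.ofReal_real_eq_id, id_eq]
  match_scalars <;> ring

lemma sRefl_self (a : V) : sRefl a a = -a :=
  Submodule.reflection_orthogonalComplement_singleton_eq_neg a

lemma sRefl_sRefl (a x : V) : sRefl a (sRefl a x) = x := Submodule.reflection_reflection _ x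

lemma copair_sum {ι : Type*} (s : Finset ι) (v : ι → V) (a : V) :
    copair (∑ i ∈ s, v i) a = ∑ i ∈ s, copair (v i) a := by
  simp only [copair, sum_inner, Finset.mul_sum, Finset.sum_div]

variable (R : RootSystemCtx V)

lemma sroot_mem_Phi (i : Fin R.l) : R.sroot i ∈ R.Φ := R.pos_subset (R.sroot_mem i)

lemma sroot_ne_zero (i : Fin R.l) : R.sroot i ≠ 0 := R.nonzero _ (sroot_mem_Phi R i)

lemma inner_sroot_self_pos (i : Fin R.l) : (0:ℝ) < ⟪R.sroot i, R.sroot i⟫ :=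
  by
  have h : 0 < ‖R.sroot i‖ := norm_pos_iff.mpr (sroot_ne_zero R i)
  rw [real_inner_self_eq_norm_sq]
  positivity

lemma copair_rho_sroot (i : Fin R.l) : copair R.rho (R.sroot i) = 1 := by
  rw [RootSystemCtx.rho, copair_sum]
  rw [Finset.sum_congr rfl (fun j _ => R.fw_pairing j i)]
  simp

lemma rho_dominant : R.IsDominant R.rho := fun i => by
  rw [copair_rho_sroot]; norm_num

lemma inner_rho_sroot (i : Fin R.l) :
    ⟪R.rho, R.sroot i⟫ = ⟪R.sroot i, R.sroot i⟫ / 2 := by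
  have h := copair_rho_sroot R i
  rw [copair] at h
  have hne := (inner_sroot_self_pos R i).ne'
  field_simp at h
  linarith

lemma inner_dominant_sroot {d : V} (hd : R.IsDominant d) (i : Fin R.l) :
    0 ≤ ⟪d, R.sroot i⟫ := by
  have h := hd i
  rw [copair] at h
  have hp := inner_sroot_self_pos R i
  have := mul_nonneg h hp.le
  rw [div_mul_cancel₀ _ hp.ne'] at this
  linarith

lemma inner_dominant_posroot {d b : V} (hd : R.IsDominant d) (hb : b ∈ R.pos) :
    0 ≤ ⟪d, b⟫ := by
  obtain ⟨c, rfl⟩ := R.pos_nat_comb b hb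
  rw [inner_sum]
  apply Finset.sum_nonneg
  intro i _
  rw [real_inner_smul_right]
  exact mul_nonneg (by positivity) (inner_dominant_sroot R hd i)

lemma coeff_eq_zero {c : Fin R.l → ℝ} (h : ∑ i, c i • R.sroot i = 0) (i : Fin R.l) :
    c i = 0 :=
  linearIndependent_iff'.mp R.sroot_indep Finset.univ c h i (Finset.mem_univ i)

lemma pos_of_nonneg_comb {b : V} (hb : b ∈ R.Φ) {c : Fin R.l → ℝ} (hc : ∀ i, 0 ≤ c i)
    (h : b = ∑ i, c i • R.sroot i) : b ∈ R.pos := by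
  rcases R.mem_pos_or b hb with ⟨h1, _⟩ | ⟨_, h2⟩
  · exact h1
  · obtain ⟨m, hm⟩ := R.pos_nat_comb _ h2
    exfalso
    have h0 : ∑ i, (c i + (m i : ℝ)) • R.sroot i = 0 := by
      simp only [add_smul, Finset.sum_add_distrib, ← h, ← hm]
      abel
    have hz := coeff_eq_zero R h0
    apply R.nonzero b hb
    rw [h]
    apply Finset.sum_eq_zero
    intro i _
    have h1 := hz i
    have h2 := hc i
    have h3 : (0:ℝ) ≤ (m i : ℝ) := by positivity
    have : c i = 0 := by linarith
    simp [this]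

lemma span_sroot_top : Submodule.span ℝ (Set.range R.sroot) = ⊤ := by
  rw [eq_top_iff, ← R.span_top, Submodule.span_le]
  intro a ha
  have hpos : ∀ b ∈ R.pos, b ∈ Submodule.span ℝ (Set.range R.sroot) := by
    intro b hb
    obtain ⟨c, rfl⟩ := R.pos_nat_comb b hb
    exact Submodule.sum_mem _ fun i _ =>
      Submodule.smul_mem _ _ (Submodule.subset_span ⟨i, rfl⟩)
  rcases R.mem_pos_or a ha with ⟨h1, _⟩ | ⟨_, h2⟩
  · exact hpos a h1
  · have := Submodule.neg_mem _ (hpos _ h2)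
    simpa using this

lemma eq_zero_of_inner_sroot {v : V} (h : ∀ i, ⟪v, R.sroot i⟫ = 0) : v = 0 := by
  have hAll : ∀ x ∈ Submodule.span ℝ (Set.range R.sroot), ⟪v, x⟫ = 0 := by
    intro x hx
    induction hx using Submodule.span_induction with
    | mem x hx => obtain ⟨i, rfl⟩ := hx; exact h i
    | zero => simp
    | add x y _ _ hx hy => rw [inner_add_right, hx, hy]; ring
    | smul c x _ hx => rw [real_inner_smul_right, hx]; ring
  have hv : ⟪v, v⟫ = 0 := hAll v (by rw [span_sroot_top]; trivial)
  exact inner_self_eq_zero.mp hv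

lemma neg_sroot_not_pos (i : Fin R.l) : -R.sroot i ∉ R.pos := by
  rcases R.mem_pos_or _ (sroot_mem_Phi R i) with ⟨_, h⟩ | ⟨h, _⟩
  · exact h
  · exact absurd (R.sroot_mem i) h

lemma sRefl_sroot_pos {i : Fin R.l} {a : V} (ha : a ∈ R.pos) (hne : a ≠ R.sroot i) :
    sRefl (R.sroot i) a ∈ R.pos := by
  have haPhi : a ∈ R.Φ := R.pos_subset ha
  have hbPhi : sRefl (R.sroot i) a ∈ R.Φ := R.refl_mem _ (sroot_mem_Phi R i) a haPhi
  rcases R.mem_pos_or _ hbPhi with ⟨h1, _⟩ | ⟨_, h2⟩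
  · exact h1
  exfalso
  obtain ⟨n, hn⟩ := R.pos_nat_comb a ha
  obtain ⟨m, hm⟩ := R.pos_nat_comb _ h2
  have hb : sRefl (R.sroot i) a = a - copair a (R.sroot i) • R.sroot i := sRefl_apply _ _
  have h0 : ∑ j, ((n j : ℝ) + (m j : ℝ) - (if j = i then copair a (R.sroot i) else 0))
      • R.sroot j = 0 := by
    simp only [sub_smul, add_smul, Finset.sum_sub_distrib, Finset.sum_add_distrib, ← hn, ← hm,
      ite_smul, zero_smul, Finset.sum_ite_eq', Finset.mem_univ, if_true]
    rw [hb]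
    abel
  have hz := coeff_eq_zero R h0
  have hji : ∀ j, j ≠ i → (n j : ℝ) = 0 := by
    intro j hj
    have h1 := hz j
    simp only [hj, if_false] at h1
    have h2 : (0:ℝ) ≤ (n j : ℝ) := by positivity
    have h3 : (0:ℝ) ≤ (m j : ℝ) := by positivity
    linarith
  have ha2 : a = (n i : ℝ) • R.sroot i := by
    rw [hn, Finset.sum_eq_single i]
    · intro j _ hj
      rw [hji j hj, zero_smul]
    · intro h; exact absurd (Finset.mem_univ i) h
  rcases R.reduced (R.sroot i) (sroot_mem_Phi R i) ((n i : ℝ)) (ha2 ▸ haPhi) with h | h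
  · rw [h, one_smul] at ha2; exact hne ha2
  · have : (0:ℝ) ≤ (n i : ℝ) := by positivity
    rw [h] at this; linarith

lemma sRefl_erase_mem {i : Fin R.l} {a : V} (ha : a ∈ R.pos.erase (R.sroot i)) :
    sRefl (R.sroot i) a ∈ R.pos.erase (R.sroot i) := by
  rw [Finset.mem_erase] at ha ⊢
  refine ⟨?_, sRefl_sroot_pos R ha.2 ha.1⟩
  intro h
  have h2 : a = -R.sroot i := by
    have h3 := congrArg (sRefl (R.sroot i)) h
    rwa [sRefl_sRefl, sRefl_self] at h3
  exact neg_sroot_not_pos R i (h2 ▸ ha.2)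

lemma sum_sRefl_pos (i : Fin R.l) :
    ∑ a ∈ R.pos, sRefl (R.sroot i) a = (∑ a ∈ R.pos, a) - (2:ℝ) • R.sroot i := by
  classical
  have hmem : R.sroot i ∈ R.pos := R.sroot_mem i
  rw [← Finset.add_sum_erase _ _ hmem, ← Finset.add_sum_erase _ (fun a => a) hmem]
  have hkey : ∑ a ∈ R.pos.erase (R.sroot i), sRefl (R.sroot i) a
      = ∑ a ∈ R.pos.erase (R.sroot i), a := by
    apply Finset.sum_nbij' (i := fun a => sRefl (R.sroot i) a) (j := fun a => sRefl (R.sroot i) a)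
    · intro a ha; exact sRefl_erase_mem R ha
    · intro a ha; exact sRefl_erase_mem R ha
    · intro a _; exact sRefl_sRefl _ _
    · intro a _; exact sRefl_sRefl _ _
    · intro a _; rfl
  rw [hkey, sRefl_self]
  module

lemma copair_possum (i : Fin R.l) : copair (∑ a ∈ R.pos, a) (R.sroot i) = 2 := by
  have h1 : sRefl (R.sroot i) (∑ a ∈ R.pos, a)
      = (∑ a ∈ R.pos, a) - (2:ℝ) • R.sroot i := by
    rw [map_sum]; exact sum_sRefl_pos R i
  rw [sRefl_apply] at h1
  have h2 : copair (∑ a ∈ R.pos, a) (R.sroot i) • R.sroot i = (2:ℝ) • R.sroot i :=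
    sub_right_injective h1
  have h3 : (copair (∑ a ∈ R.pos, a) (R.sroot i) - 2) • R.sroot i = 0 := by
    rw [sub_smul, h2, sub_self]
  rcases smul_eq_zero.mp h3 with h | h
  · linarith [h]
  · exact absurd h (sroot_ne_zero R i)

lemma rho_eq_half_possum : R.rho = (2:ℝ)⁻¹ • ∑ a ∈ R.pos, a := by
  have h : ∀ i, ⟪R.rho - (2:ℝ)⁻¹ • ∑ a ∈ R.pos, a, R.sroot i⟫ = 0 := by
    intro i
    rw [inner_sub_left, real_inner_smul_left, inner_rho_sroot]
    have hc := copair_possum R i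
    rw [copair] at hc
    have hne := (inner_sroot_self_pos R i).ne'
    field_simp at hc
    have hcomm : ⟪(∑ a ∈ R.pos, a), R.sroot i⟫ = ⟪R.sroot i, (∑ a ∈ R.pos, a)⟫ :=
      real_inner_comm _ _
    linarith
  have := eq_zero_of_inner_sroot R h
  rw [sub_eq_zero] at this
  exact this

lemma weyl_image_Phi {w : V ≃ₗᵢ[ℝ] V} (hw : w ∈ R.weylGroup) :
    Finset.image (⇑w) R.Φ = R.Φ := by
  induction hw using Subgroup.closure_induction with
  | mem g hg =>
    obtain ⟨a, ha, rfl⟩ := hg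
    apply Finset.eq_of_subset_of_card_le
    · intro b hb
      obtain ⟨c, hc, rfl⟩ := Finset.mem_image.mp hb
      exact R.refl_mem a ha c hc
    · rw [Finset.card_image_of_injective _ (sRefl a).injective]
  | one => simp
  | mul x y hx hy ihx ihy =>
    have hcoe : ⇑(x * y) = ⇑x ∘ ⇑y := rfl
    rw [hcoe, ← Finset.image_image, ihy, ihx]
  | inv x hx ihx =>
    conv_lhs => rw [← ihx]
    rw [Finset.image_image]
    have hcoe : ⇑x⁻¹ ∘ ⇑x = id := by
      funext v; exact x.symm_apply_apply v
    rw [hcoe, Finset.image_id]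

lemma weyl_maps_Phi {w : V ≃ₗᵢ[ℝ] V} (hw : w ∈ R.weylGroup) {a : V} (ha : a ∈ R.Φ) :
    w a ∈ R.Φ := by
  rw [← weyl_image_Phi R hw]
  exact Finset.mem_image_of_mem _ ha

/-- The number of positive roots sent by `w` out of the positive system. -/
def negCount (w : V ≃ₗᵢ[ℝ] V) : ℕ := (R.pos.filter (fun a => w a ∉ R.pos)).card

lemma sRefl_sroot_mem_weyl (i : Fin R.l) : sRefl (R.sroot i) ∈ R.weylGroup :=
  Subgroup.subset_closure ⟨R.sroot i, sroot_mem_Phi R i, rfl⟩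

lemma neg_mem_pos_of_not_pos {a : V} (ha : a ∈ R.Φ) (h : a ∉ R.pos) : -a ∈ R.pos := by
  rcases R.mem_pos_or a ha with ⟨h1, _⟩ | ⟨_, h2⟩
  · exact absurd h1 h
  · exact h2

lemma negCount_lt {w : V ≃ₗᵢ[ℝ] V} (hw : w ∈ R.weylGroup) {i : Fin R.l}
    (hi : w (R.sroot i) ∉ R.pos) :
    negCount R (w * sRefl (R.sroot i)) < negCount R w := by
  have hmul : ∀ x, (w * sRefl (R.sroot i)) x = w (sRefl (R.sroot i) x) := fun x => rfl
  have hBmem : R.sroot i ∈ R.pos.filter (fun a => w a ∉ R.pos) :=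
    Finset.mem_filter.mpr ⟨R.sroot_mem i, hi⟩
  have hcard : (R.pos.filter fun a => (w * sRefl (R.sroot i)) a ∉ R.pos).card
      = ((R.pos.filter fun a => w a ∉ R.pos).erase (R.sroot i)).card := by
    apply Finset.card_nbij' (i := fun a => sRefl (R.sroot i) a)
      (j := fun a => sRefl (R.sroot i) a)
    · intro a ha
      obtain ⟨hapos, hana⟩ := Finset.mem_filter.mp ha
      have hane : a ≠ R.sroot i := by
        rintro rfl
        apply hana
        rw [hmul]
        have h2 : w (sRefl (R.sroot i) (R.sroot i)) = -(w (R.sroot i)) := by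
          rw [sRefl_self, map_neg]
        rw [h2]
        exact neg_mem_pos_of_not_pos R (weyl_maps_Phi R hw (sroot_mem_Phi R i)) hi
      have h3 : sRefl (R.sroot i) a ∈ R.pos.erase (R.sroot i) :=
        sRefl_erase_mem R (Finset.mem_erase.mpr ⟨hane, hapos⟩)
      simp only [Finset.mem_coe]
      rw [Finset.mem_erase, Finset.mem_filter]
      refine ⟨(Finset.mem_erase.mp h3).1, (Finset.mem_erase.mp h3).2, ?_⟩
      rw [← hmul]
      exact hana
    · intro b hb
      obtain ⟨hbne, hbf⟩ := Finset.mem_erase.mp hb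
      obtain ⟨hbpos, hbw⟩ := Finset.mem_filter.mp hbf
      have h3 : sRefl (R.sroot i) b ∈ R.pos.erase (R.sroot i) :=
        sRefl_erase_mem R (Finset.mem_erase.mpr ⟨hbne, hbpos⟩)
      simp only [Finset.mem_coe]
      rw [Finset.mem_filter]
      refine ⟨(Finset.mem_erase.mp h3).2, ?_⟩
      rw [hmul, sRefl_sRefl]
      exact hbw
    · intro a _; exact sRefl_sRefl _ _
    · intro a _; exact sRefl_sRefl _ _
  rw [negCount, negCount, hcard, Finset.card_erase_of_mem hBmem]
  exact Nat.sub_lt (Finset.card_pos.mpr ⟨_, hBmem⟩) one_pos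

lemma weyl_fix_rho {w : V ≃ₗᵢ[ℝ] V} (hw : w ∈ R.weylGroup)
    (hall : ∀ j, w (R.sroot j) ∈ R.pos) : w R.rho = R.rho := by
  have hpos : ∀ a ∈ R.pos, w a ∈ R.pos := by
    intro a ha
    have haPhi : w a ∈ R.Φ := weyl_maps_Phi R hw (R.pos_subset ha)
    obtain ⟨c, hc⟩ := R.pos_nat_comb a ha
    choose m hm using fun j => R.pos_nat_comb _ (hall j)
    have hwa : w a = ∑ j, (∑ k, (c k : ℝ) * (m k j : ℝ)) • R.sroot j := by
      rw [hc, map_sum]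
      simp_rw [map_smul, hm, Finset.smul_sum, smul_smul, Finset.sum_smul]
      rw [Finset.sum_comm]
    exact pos_of_nonneg_comb R haPhi (fun j => by positivity) hwa
  have himg : Finset.image (⇑w) R.pos = R.pos := by
    apply Finset.eq_of_subset_of_card_le
    · intro b hb
      obtain ⟨a, ha, rfl⟩ := Finset.mem_image.mp hb
      exact hpos a ha
    · rw [Finset.card_image_of_injective _ w.injective]
  have hsum : w (∑ a ∈ R.pos, a) = ∑ a ∈ R.pos, a := by
    rw [map_sum]
    conv_rhs => rw [← himg]
    rw [Finset.sum_image (fun a _ b _ h => w.injective h)]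
  rw [rho_eq_half_possum R, map_smul, hsum]

lemma key_ineq : ∀ (n : ℕ) (w : V ≃ₗᵢ[ℝ] V), w ∈ R.weylGroup → negCount R w = n →
    ∀ d, R.IsDominant d → ⟪w d, R.rho⟫ ≤ ⟪d, R.rho⟫ := by
  intro n
  induction n using Nat.strong_induction_on with
  | _ n ih =>
    intro w hw hn d hd
    by_cases hall : ∀ j, w (R.sroot j) ∈ R.pos
    · have hρ := weyl_fix_rho R hw hall
      calc ⟪w d, R.rho⟫ = ⟪w d, w R.rho⟫ := by rw [hρ]
        _ = ⟪d, R.rho⟫ := w.inner_map_map d R.rho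
        _ ≤ ⟪d, R.rho⟫ := le_refl _
    · push_neg at hall
      obtain ⟨i, hi⟩ := hall
      have hlt : negCount R (w * sRefl (R.sroot i)) < n := hn ▸ negCount_lt R hw hi
      have hw' : w * sRefl (R.sroot i) ∈ R.weylGroup :=
        Subgroup.mul_mem _ hw (sRefl_sroot_mem_weyl R i)
      have hIH := ih _ hlt (w * sRefl (R.sroot i)) hw' rfl
      have hmul : ∀ x, (w * sRefl (R.sroot i)) x = w (sRefl (R.sroot i) x) := fun x => rfl
      have h1 : w d = (w * sRefl (R.sroot i)) (sRefl (R.sroot i) d) := by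
        rw [hmul, sRefl_sRefl]
      have h2 : sRefl (R.sroot i) d = d - copair d (R.sroot i) • R.sroot i := sRefl_apply _ _
      have h3 : (w * sRefl (R.sroot i)) (R.sroot i) = -(w (R.sroot i)) := by
        rw [hmul, sRefl_self, map_neg]
      have h4 : -(w (R.sroot i)) ∈ R.pos :=
        neg_mem_pos_of_not_pos R (weyl_maps_Phi R hw (sroot_mem_Phi R i)) hi
      have h5 : 0 ≤ ⟪R.rho, -(w (R.sroot i))⟫ :=
        inner_dominant_posroot R (rho_dominant R) h4
      have h6 : 0 ≤ copair d (R.sroot i) := hd i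
      have h7 : ⟪w d, R.rho⟫ = ⟪(w * sRefl (R.sroot i)) d, R.rho⟫
          - copair d (R.sroot i) * ⟪-(w (R.sroot i)), R.rho⟫ := by
        rw [h1, h2, map_sub, map_smul, inner_sub_left, real_inner_smul_left, h3]
      rw [h7]
      have h8 := hIH d hd
      have h9 : 0 ≤ copair d (R.sroot i) * ⟪-(w (R.sroot i)), R.rho⟫ := by
        apply mul_nonneg h6
        rw [real_inner_comm]
        exact h5
      linarith

end Aux

/-- For an involution `s ∈ W`, with `μ := {λ + s(λ)}` and
`g(λ) := 2⟨{μ − ρ} − (μ − ρ), ρ⟩`, one has `0 ≤ g(λ) ≤ ‖2ρ‖²`.  Here `μ` and `{μ − ρ}`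
are encoded by the hypotheses that they are the dominant representatives of the Weyl
orbits of `λ + s(λ)` and `μ − ρ` respectively. -/
theorem statement4 {V : Type*} [NormedAddCommGroup V] [InnerProductSpace ℝ V]
    [FiniteDimensional ℝ V] (R : RootSystemCtx V)
    (s : V ≃ₗᵢ[ℝ] V) (hs : s ∈ R.weylGroup) (hinv : s * s = 1)
    (lam : V) (μ : V) (hμ : R.IsDomRep (lam + s lam) μ)
    (ν : V) (hν : R.IsDomRep (μ - R.rho) ν) :
    0 ≤ 2 * ⟪ν - (μ - R.rho), R.rho⟫ ∧
      2 * ⟪ν - (μ - R.rho), R.rho⟫ ≤ ‖(2 : ℝ) • R.rho‖ ^ 2 := by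
  obtain ⟨hμdom, w1, hw1, hw1e⟩ := hμ
  obtain ⟨hνdom, w2, hw2, hw2e⟩ := hν
  have hkey : ∀ (w : V ≃ₗᵢ[ℝ] V), w ∈ R.weylGroup → ∀ d, R.IsDominant d →
      ⟪w d, R.rho⟫ ≤ ⟪d, R.rho⟫ := fun w hw d hd => key_ineq R (negCount R w) w hw rfl d hd
  have hinvν : w2⁻¹ ν = μ - R.rho := by
    rw [← hw2e]
    exact w2.symm_apply_apply _
  constructor
  · have h := hkey w2⁻¹ (Subgroup.inv_mem _ hw2) ν hνdom
    rw [hinvν] at h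
    rw [inner_sub_left]
    linarith
  · have h1 := hkey w2 hw2 μ hμdom
    have h2 : ν = w2 μ - w2 R.rho := by rw [← hw2e, map_sub]
    have h3 : ‖w2 R.rho‖ = ‖R.rho‖ := w2.norm_map _
    have h4 : -⟪w2 R.rho, R.rho⟫ ≤ ‖R.rho‖ ^ 2 := by
      have ha := abs_real_inner_le_norm (w2 R.rho) R.rho
      rw [h3] at ha
      have hb := neg_abs_le ⟪w2 R.rho, R.rho⟫
      nlinarith [norm_nonneg R.rho]
    have h5 : ‖(2 : ℝ) • R.rho‖ ^ 2 = 4 * ‖R.rho‖ ^ 2 := by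
      rw [norm_smul]
      simp [Real.norm_ofNat]
      ring
    have h6 : ⟪R.rho, R.rho⟫ = ‖R.rho‖ ^ 2 := real_inner_self_eq_norm_sq _
    rw [h2, h5]
    rw [inner_sub_left, inner_sub_left, inner_sub_left]
    linarith
end
end

section
/- Let s ∈ W be an involution such that s(ϖ_i) ≠ ϖ_i for every i ∈ {1,…,l}. Then the set of all λ = Σ_{i=1}^l λ_i ϖ_i with 2λ_i a positive integer for every i, satisfying ‖2λ‖² ≤ ‖{μ − ρ} + ρ‖² where μ := {λ + s(λ)}, is finite. -/
open scoped RealInnerProductSpace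

noncomputable section

namespace RootSystemCtx

variable {V : Type*} [NormedAddCommGroup V] [InnerProductSpace ℝ V] [FiniteDimensional ℝ V]

/-- The dominant representative `{v}` of the Weyl group orbit of `v` (for a root system such
a representative exists and is unique, so the choice below is well defined). -/
noncomputable def domRep (R : RootSystemCtx V) (v : V) : V :=
  letI := Classical.propDecidable (∃ d, R.IsDomRep v d)
  if h : ∃ d, R.IsDomRep v d then h.choose else v

end RootSystemCtx

section WeylAux

variable {V : Type*} [NormedAddCommGroup V] [InnerProductSpace ℝ V] [FiniteDimensional ℝ V]

lemma sRefl_apply_formula {a : V} (ha : a ≠ 0) (v : V) :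
    sRefl a v = v - copair v a • a := by
  have h1 : ⟪a, a⟫ ≠ 0 := inner_self_ne_zero.mpr ha
  rw [sRefl, Submodule.reflection_orthogonal_apply, Submodule.reflection_singleton_apply, copair,
    real_inner_comm v a]
  simp only [RCLike.ofReal_real_eq_id, id]
  have h2 : (‖a‖ : ℝ) ^ 2 = ⟪a, a⟫ := (real_inner_self_eq_norm_sq a).symm
  rw [h2, two_smul]
  have h3 : (2 * ⟪v, a⟫ / ⟪a, a⟫) • a
      = (⟪v, a⟫ / ⟪a, a⟫) • a + (⟪v, a⟫ / ⟪a, a⟫) • a := by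
    rw [← add_smul]; congr 1; ring
  rw [h3]; abel

lemma real_inner_self_pos' {a : V} (ha : a ≠ 0) : 0 < ⟪a, a⟫ :=
  lt_of_le_of_ne real_inner_self_nonneg (Ne.symm (inner_self_ne_zero.mpr ha))

lemma sRefl_mul_self (a : V) : sRefl a * sRefl a = 1 := by
  apply LinearIsometryEquiv.ext
  intro v
  show sRefl a (sRefl a v) = v
  exact Submodule.reflection_reflection _ v

lemma sRefl_inv (a : V) : (sRefl a)⁻¹ = sRefl a :=
  inv_eq_of_mul_eq_one_right (sRefl_mul_self a)

lemma sRefl_neg (a : V) : sRefl (-a) = sRefl a := by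
  unfold sRefl
  congr 2
  rw [show ({-a} : Set V) = -{a} by simp, Submodule.span_neg]

lemma copair_map (g : V ≃ₗᵢ[ℝ] V) (v a : V) : copair (g v) (g a) = copair v a := by
  unfold copair; rw [g.inner_map_map, g.inner_map_map]

lemma copair_self {a : V} (ha : a ≠ 0) : copair a a = 2 := by
  have h1 : ⟪a, a⟫ ≠ 0 := inner_self_ne_zero.mpr ha
  unfold copair; field_simp

lemma copair_sum_left {n : ℕ} (f : Fin n → V) (c : Fin n → ℝ) (a : V) :
    copair (∑ i, c i • f i) a = ∑ i, c i * copair (f i) a := by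
  unfold copair
  rw [sum_inner, Finset.mul_sum, Finset.sum_div]
  refine Finset.sum_congr rfl fun i _ => ?_
  rw [real_inner_smul_left]; ring

lemma inner_eq_copair {a : V} (ha : a ≠ 0) (v : V) :
    ⟪v, a⟫ = copair v a * ⟪a, a⟫ / 2 := by
  have h1 : ⟪a, a⟫ ≠ 0 := inner_self_ne_zero.mpr ha
  unfold copair; field_simp

lemma sRefl_self_neg {a : V} (ha : a ≠ 0) : sRefl a a = -a := by
  rw [sRefl_apply_formula ha, copair_self ha, two_smul]; abel

lemma sRefl_conj (g : V ≃ₗᵢ[ℝ] V) {a : V} (ha : a ≠ 0) :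
    sRefl (g a) = g * sRefl a * g⁻¹ := by
  have hga : g a ≠ 0 := by
    intro h
    exact ha (by simpa using g.toLinearEquiv.map_eq_zero_iff.mp h)
  apply LinearIsometryEquiv.ext
  intro v
  have h1 : (g * sRefl a * g⁻¹) v = g (sRefl a (g.symm v)) := rfl
  rw [h1, sRefl_apply_formula hga, sRefl_apply_formula ha, map_sub,
    LinearIsometryEquiv.map_smul]
  rw [g.apply_symm_apply]
  congr 2
  rw [← copair_map g (g.symm v) a, g.apply_symm_apply]

end WeylAux

namespace RootSystemCtx

variable {V : Type*} [NormedAddCommGroup V] [InnerProductSpace ℝ V] [FiniteDimensional ℝ V]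
variable (R : RootSystemCtx V)

lemma sroot_mem_Phi (i : Fin R.l) : R.sroot i ∈ R.Φ := R.pos_subset (R.sroot_mem i)

lemma sroot_ne_zero (i : Fin R.l) : R.sroot i ≠ 0 := R.nonzero _ (R.sroot_mem_Phi i)

lemma neg_mem_Phi {a : V} (ha : a ∈ R.Φ) : -a ∈ R.Φ := by
  have := R.refl_mem a ha a ha
  rwa [sRefl_self_neg (R.nonzero a ha)] at this

lemma coeff_unique {x y : Fin R.l → ℝ}
    (h : ∑ i, x i • R.sroot i = ∑ i, y i • R.sroot i) : x = y := by
  have h2 : ∑ i, (x i - y i) • R.sroot i = 0 := by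
    simp only [sub_smul, Finset.sum_sub_distrib, h, sub_self]
  funext i
  have := Fintype.linearIndependent_iff.mp R.sroot_indep (fun i => x i - y i) h2 i
  linarith

/-- The product of the simple reflections along a word. -/
def wp (γ : List (Fin R.l)) : V ≃ₗᵢ[ℝ] V :=
  (γ.map fun i => sRefl (R.sroot i)).prod

@[simp] lemma wp_nil : R.wp [] = 1 := rfl

lemma wp_cons (i : Fin R.l) (γ : List (Fin R.l)) :
    R.wp (i :: γ) = sRefl (R.sroot i) * R.wp γ := by
  unfold wp; rw [List.map_cons, List.prod_cons]

lemma wp_append (γ δ : List (Fin R.l)) : R.wp (γ ++ δ) = R.wp γ * R.wp δ := by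
  unfold wp; rw [List.map_append, List.prod_append]

lemma wp_singleton (i : Fin R.l) : R.wp [i] = sRefl (R.sroot i) := by
  rw [wp_cons, wp_nil, mul_one]

lemma wp_reverse (γ : List (Fin R.l)) : R.wp γ.reverse = (R.wp γ)⁻¹ := by
  induction γ with
  | nil => simp
  | cons i γ ih =>
      rw [List.reverse_cons, wp_append, ih, wp_singleton, wp_cons, mul_inv_rev, sRefl_inv]

lemma wp_maps_Phi (γ : List (Fin R.l)) {b : V} (hb : b ∈ R.Φ) : R.wp γ b ∈ R.Φ := by
  induction γ with
  | nil => simpa using hb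
  | cons i γ ih =>
      rw [wp_cons]
      have : (sRefl (R.sroot i) * R.wp γ) b = sRefl (R.sroot i) (R.wp γ b) := rfl
      rw [this]
      exact R.refl_mem _ (R.sroot_mem_Phi i) _ ih

lemma wp_mem_weylGroup (γ : List (Fin R.l)) : R.wp γ ∈ R.weylGroup := by
  induction γ with
  | nil => exact Subgroup.one_mem _
  | cons i γ ih =>
      rw [wp_cons]
      exact Subgroup.mul_mem _
        (Subgroup.subset_closure ⟨R.sroot i, R.sroot_mem_Phi i, rfl⟩) ih

/-- Fact F: a simple reflection sends every positive root other than the corresponding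
simple root to a positive root. -/
lemma sRefl_sroot_pos (i : Fin R.l) {b : V} (hb : b ∈ R.pos) (hne : b ≠ R.sroot i) :
    sRefl (R.sroot i) b ∈ R.pos := by
  have hbΦ : b ∈ R.Φ := R.pos_subset hb
  have hb0 : b ≠ 0 := R.nonzero b hbΦ
  obtain ⟨c, hc⟩ := R.pos_nat_comb b hb
  -- there is j ≠ i with c j ≠ 0
  have hj : ∃ j, j ≠ i ∧ c j ≠ 0 := by
    by_contra hcon
    push_neg at hcon
    have hb' : b = (c i : ℝ) • R.sroot i := by
      rw [hc]
      rw [Finset.sum_eq_single i]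
      · intro j _ hji; rw [hcon j hji]; simp
      · intro h; exact absurd (Finset.mem_univ i) h
    have := R.reduced (R.sroot i) (R.sroot_mem_Phi i) (c i) (by rw [← hb']; exact hbΦ)
    rcases this with h1 | h1
    · apply hne; rw [hb', h1, one_smul]
    · have : (0 : ℝ) ≤ (c i : ℝ) := Nat.cast_nonneg _
      rw [h1] at this; linarith
  obtain ⟨j, hji, hcj⟩ := hj
  have hmem : sRefl (R.sroot i) b ∈ R.Φ := R.refl_mem _ (R.sroot_mem_Phi i) _ hbΦ
  rcases R.mem_pos_or _ hmem with h | h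
  · exact h.1
  · exfalso
    obtain ⟨d, hd⟩ := R.pos_nat_comb _ h.2
    -- -(sRefl (sroot i) b) = ∑ d and sRefl (sroot i) b = b - copair b (sroot i) • sroot i
    set k := copair b (R.sroot i) with hk
    have heq : sRefl (R.sroot i) b = b - k • R.sroot i :=
      sRefl_apply_formula (R.sroot_ne_zero i) b
    have heq' : sRefl (R.sroot i) b = b - k • R.sroot i := heq
    have hsum0 : ∑ m, ((c m : ℝ) + (d m : ℝ) - (if m = i then k else 0)) • R.sroot m = 0 := by
      simp only [sub_smul, add_smul, ite_smul, zero_smul, Finset.sum_sub_distrib,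
        Finset.sum_add_distrib]
      rw [Finset.sum_ite_eq' Finset.univ i (fun m => k • R.sroot m)]
      simp only [Finset.mem_univ, if_true]
      rw [← hc, ← hd, heq']
      abel
    have hzero : (fun m => ((c m : ℝ) + (d m : ℝ) - (if m = i then k else 0)))
        = fun _ => (0 : ℝ) := by
      apply R.coeff_unique
      rw [hsum0]; simp
    have := congrFun hzero j
    simp only [if_neg hji] at this
    have hd0 : (0 : ℝ) ≤ (d j : ℝ) := Nat.cast_nonneg _
    have hc0 : (0 : ℝ) < (c j : ℝ) := by
      have := Nat.pos_of_ne_zero hcj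
      exact_mod_cast this
    linarith [this]

/-- Every reflection in a positive root is a product of simple reflections. -/
lemma sRefl_pos_eq_wp : ∀ n : ℕ, ∀ a ∈ R.pos, ∀ c : Fin R.l → ℕ,
    a = ∑ i, (c i : ℝ) • R.sroot i → (∑ i, c i) ≤ n → ∃ γ, sRefl a = R.wp γ := by
  intro n
  induction n with
  | zero =>
      intro a ha c hc hn
      exfalso
      have hz : ∀ i ∈ Finset.univ, c i = 0 := Finset.sum_eq_zero_iff.mp (Nat.le_zero.mp hn)
      have : a = 0 := by
        rw [hc]
        apply Finset.sum_eq_zero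
        intro i hi
        rw [hz i hi]; simp
      exact R.nonzero a (R.pos_subset ha) this
  | succ n ih =>
      intro a ha c hc hn
      by_cases hsimple : ∃ i, a = R.sroot i
      · obtain ⟨i, rfl⟩ := hsimple
        exact ⟨[i], (R.wp_singleton i).symm⟩
      · push_neg at hsimple
        have ha0 : a ≠ 0 := R.nonzero a (R.pos_subset ha)
        have hposa : 0 < ⟪a, a⟫ := real_inner_self_pos' ha0
        have hex : ∃ i, 0 < (c i : ℝ) * ⟪R.sroot i, a⟫ := by
          by_contra hcon
          push_neg at hcon
          have hle : ⟪a, a⟫ ≤ 0 := by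
            have : ⟪a, a⟫ = ∑ i, (c i : ℝ) * ⟪R.sroot i, a⟫ := by
              nth_rewrite 1 [hc]
              rw [sum_inner]
              exact Finset.sum_congr rfl fun i _ => real_inner_smul_left _ _ _
            rw [this]
            exact Finset.sum_nonpos fun i _ => hcon i
          linarith
        obtain ⟨i, hi⟩ := hex
        have hinner : 0 < ⟪R.sroot i, a⟫ := by
          rcases lt_or_ge 0 ⟪R.sroot i, a⟫ with h | h
          · exact h
          · exfalso
            have h0 : (0 : ℝ) ≤ (c i : ℝ) := Nat.cast_nonneg _
            nlinarith
        set k := copair a (R.sroot i) with hkdef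
        have hselfpos : 0 < ⟪R.sroot i, R.sroot i⟫ := real_inner_self_pos' (R.sroot_ne_zero i)
        have hk : 0 < k := by
          rw [hkdef, copair]
          apply div_pos _ hselfpos
          rw [real_inner_comm]
          linarith
        obtain ⟨m, hm⟩ := R.crystal (R.sroot i) (R.sroot_mem_Phi i) a (R.pos_subset ha)
        have hm1 : (1 : ℝ) ≤ k := by
          rw [← hkdef] at hm
          rw [hm] at hk ⊢
          exact_mod_cast hk
        have hne : a ≠ R.sroot i := hsimple i
        have hb : sRefl (R.sroot i) a ∈ R.pos := R.sRefl_sroot_pos i ha hne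
        set b := sRefl (R.sroot i) a with hbdef
        obtain ⟨d, hd⟩ := R.pos_nat_comb b hb
        have hbe : b = ∑ j, ((c j : ℝ) - (if j = i then k else 0)) • R.sroot j := by
          rw [hbdef, sRefl_apply_formula (R.sroot_ne_zero i)]
          simp only [sub_smul, ite_smul, zero_smul, Finset.sum_sub_distrib]
          rw [Finset.sum_ite_eq' Finset.univ i (fun m => k • R.sroot m)]
          simp only [Finset.mem_univ, if_true]
          rw [← hc, ← hkdef]
        have hcd : (fun j => (d j : ℝ))
            = fun j => (c j : ℝ) - (if j = i then k else 0) :=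
          R.coeff_unique (by rw [← hd, hbe])
        have hsumd : (∑ j, (d j : ℝ)) = (∑ j, (c j : ℝ)) - k := by
          calc ∑ j, (d j : ℝ) = ∑ j, ((c j : ℝ) - (if j = i then k else 0)) := by
                exact Finset.sum_congr rfl fun j _ => congrFun hcd j
            _ = (∑ j, (c j : ℝ)) - (∑ j, (if j = i then k else 0)) := by
                rw [Finset.sum_sub_distrib]
            _ = (∑ j, (c j : ℝ)) - k := by
                rw [Finset.sum_ite_eq' Finset.univ i (fun _ => k)]
                simp
        have hdn : (∑ j, d j) ≤ n := by
          have h1 : ((∑ j, d j : ℕ) : ℝ) ≤ ((n : ℕ) : ℝ) := by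
            push_cast
            rw [hsumd]
            have h2 : ((∑ j, c j : ℕ) : ℝ) ≤ (n : ℝ) + 1 := by
              exact_mod_cast hn
            push_cast at h2
            linarith
          exact_mod_cast h1
        obtain ⟨γ, hγ⟩ := ih b hb d hd hdn
        refine ⟨i :: (γ ++ [i]), ?_⟩
        have hab : a = sRefl (R.sroot i) b := (Submodule.reflection_reflection _ a).symm
        have hbne : b ≠ 0 := R.nonzero b (R.pos_subset hb)
        calc sRefl a = sRefl (sRefl (R.sroot i) b) := by rw [← hab]
          _ = sRefl (R.sroot i) * sRefl b * (sRefl (R.sroot i))⁻¹ := sRefl_conj _ hbne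
          _ = sRefl (R.sroot i) * (R.wp γ * sRefl (R.sroot i)) := by
              rw [sRefl_inv, hγ, mul_assoc]
          _ = R.wp (i :: (γ ++ [i])) := by
              rw [wp_cons, wp_append, wp_singleton]

/-- Every element of the Weyl group is a product of simple reflections. -/
lemma exists_word {w : V ≃ₗᵢ[ℝ] V} (hw : w ∈ R.weylGroup) : ∃ γ, w = R.wp γ := by
  induction hw using Subgroup.closure_induction with
  | mem g hg =>
      obtain ⟨a, haΦ, rfl⟩ := hg
      rcases R.mem_pos_or a haΦ with h | h
      · obtain ⟨c, hc⟩ := R.pos_nat_comb a h.1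
        exact R.sRefl_pos_eq_wp (∑ i, c i) a h.1 c hc le_rfl
      · obtain ⟨c, hc⟩ := R.pos_nat_comb (-a) h.2
        obtain ⟨γ, hγ⟩ := R.sRefl_pos_eq_wp (∑ i, c i) (-a) h.2 c hc le_rfl
        exact ⟨γ, by rw [← sRefl_neg a]; exact hγ⟩
  | one => exact ⟨[], rfl⟩
  | mul x y hx hy ihx ihy =>
      obtain ⟨γ, rfl⟩ := ihx
      obtain ⟨δ, rfl⟩ := ihy
      exact ⟨γ ++ δ, (R.wp_append γ δ).symm⟩
  | inv x hx ihx =>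
      obtain ⟨γ, rfl⟩ := ihx
      exact ⟨γ.reverse, (R.wp_reverse γ).symm⟩

/-- The deletion condition. -/
lemma deletion : ∀ γ : List (Fin R.l), ∀ i : Fin R.l,
    -(R.wp γ (R.sroot i)) ∈ R.pos →
    ∃ γ', R.wp γ * sRefl (R.sroot i) = R.wp γ' ∧ γ'.length + 1 = γ.length := by
  intro γ
  induction γ with
  | nil =>
      intro i hneg
      exfalso
      have : R.wp [] (R.sroot i) = R.sroot i := rfl
      rw [this] at hneg
      rcases R.mem_pos_or (R.sroot i) (R.sroot_mem_Phi i) with h | h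
      · exact h.2 hneg
      · exact h.1 (R.sroot_mem i)
  | cons j δ ih =>
      intro i hneg
      have hx : R.wp δ (R.sroot i) ∈ R.Φ := R.wp_maps_Phi δ (R.sroot_mem_Phi i)
      set x := R.wp δ (R.sroot i) with hxdef
      have hcons : R.wp (j :: δ) (R.sroot i) = sRefl (R.sroot j) x := by
        rw [wp_cons]; rfl
      rcases R.mem_pos_or x hx with h | h
      · -- x positive; then x = sroot j
        have hxj : x = R.sroot j := by
          by_contra hne
          have : sRefl (R.sroot j) x ∈ R.pos := R.sRefl_sroot_pos j h.1 hne
          rw [hcons] at hneg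
          rcases R.mem_pos_or _ (R.refl_mem _ (R.sroot_mem_Phi j) _ hx) with h2 | h2
          · exact h2.2 hneg
          · exact h2.1 this
        refine ⟨δ, ?_, rfl⟩
        have hconj : sRefl (R.sroot j) = R.wp δ * sRefl (R.sroot i) * (R.wp δ)⁻¹ := by
          rw [← hxj]
          exact sRefl_conj (R.wp δ) (R.sroot_ne_zero i)
        rw [wp_cons, hconj]
        group
        rw [mul_assoc, sRefl_mul_self, mul_one]
      · -- x negative: use ih
        obtain ⟨δ', hδ', hlen⟩ := ih i h.2
        refine ⟨j :: δ', ?_, by simp [hlen.symm]⟩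
        rw [wp_cons, wp_cons, mul_assoc, hδ']

/-- The nonnegative cone spanned by the simple roots. -/
def Qplus : Set V := {v | ∃ t : Fin R.l → ℝ, (∀ i, 0 ≤ t i) ∧ v = ∑ i, t i • R.sroot i}

lemma Qplus_zero : (0 : V) ∈ R.Qplus :=
  ⟨fun _ => 0, fun _ => le_rfl, by simp⟩

lemma Qplus_add {u v : V} (hu : u ∈ R.Qplus) (hv : v ∈ R.Qplus) : u + v ∈ R.Qplus := by
  obtain ⟨t, ht, rfl⟩ := hu
  obtain ⟨r, hr, rfl⟩ := hv
  exact ⟨fun i => t i + r i, fun i => add_nonneg (ht i) (hr i), by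
    rw [← Finset.sum_add_distrib]
    exact Finset.sum_congr rfl fun i _ => (add_smul _ _ _).symm⟩

lemma Qplus_smul {v : V} {c : ℝ} (hc : 0 ≤ c) (hv : v ∈ R.Qplus) : c • v ∈ R.Qplus := by
  obtain ⟨t, ht, rfl⟩ := hv
  exact ⟨fun i => c * t i, fun i => mul_nonneg hc (ht i), by
    rw [Finset.smul_sum]
    exact Finset.sum_congr rfl fun i _ => (mul_smul _ _ _).symm⟩

lemma pos_subset_Qplus {a : V} (ha : a ∈ R.pos) : a ∈ R.Qplus := by
  obtain ⟨c, hc⟩ := R.pos_nat_comb a ha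
  exact ⟨fun i => (c i : ℝ), fun i => Nat.cast_nonneg _, hc⟩

/-- The key dominance lemma: for dominant `μ` and `w` a word in simple reflections,
`μ - w μ` is a nonnegative combination of simple roots. -/
lemma dominance : ∀ n : ℕ, ∀ γ : List (Fin R.l), γ.length ≤ n → ∀ μ : V,
    R.IsDominant μ → μ - R.wp γ μ ∈ R.Qplus := by
  intro n
  induction n with
  | zero =>
      intro γ hγ μ hμ
      rw [List.length_eq_zero_iff.mp (Nat.le_zero.mp hγ)]
      simpa using R.Qplus_zero
  | succ n ih =>
      intro γ hγ μ hμ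
      rcases γ.eq_nil_or_concat with rfl | ⟨δ, i, rfl⟩
      · simpa using R.Qplus_zero
      · rw [List.concat_eq_append] at hγ ⊢
        have hδlen : δ.length ≤ n := by
          rw [List.length_append] at hγ
          simp at hγ
          omega
        have hwpa : R.wp (δ ++ [i]) μ = R.wp δ ((sRefl (R.sroot i)) μ) := by
          rw [wp_append, wp_singleton]; rfl
        set c := copair μ (R.sroot i) with hcdef
        have hc0 : 0 ≤ c := hμ i
        have hrefl : (sRefl (R.sroot i)) μ = μ - c • R.sroot i :=
          sRefl_apply_formula (R.sroot_ne_zero i) μ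
        have hsplit : μ - R.wp (δ ++ [i]) μ
            = (μ - R.wp δ μ) + c • (R.wp δ (R.sroot i)) := by
          rw [hwpa, hrefl, map_sub, LinearIsometryEquiv.map_smul]
          abel
        have hxΦ : R.wp δ (R.sroot i) ∈ R.Φ := R.wp_maps_Phi δ (R.sroot_mem_Phi i)
        rcases R.mem_pos_or _ hxΦ with h | h
        · rw [hsplit]
          exact R.Qplus_add (ih δ hδlen μ hμ)
            (R.Qplus_smul hc0 (R.pos_subset_Qplus h.1))
        · obtain ⟨γ', hγ', hlen⟩ := R.deletion δ i h.2
          have heq : R.wp (δ ++ [i]) = R.wp γ' := by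
            rw [wp_append, wp_singleton, hγ']
          rw [heq]
          apply ih γ' _ μ hμ
          omega

/-- Lemma A: for `w` in the Weyl group and dominant `μ`, `ν`,
the inner product `⟪ν, μ - w μ⟫` is nonnegative. -/
lemma inner_sub_orbit_nonneg {w : V ≃ₗᵢ[ℝ] V} (hw : w ∈ R.weylGroup)
    {μ ν : V} (hμ : R.IsDominant μ) (hν : R.IsDominant ν) :
    0 ≤ ⟪ν, μ - w μ⟫ := by
  obtain ⟨γ, rfl⟩ := R.exists_word hw
  obtain ⟨t, ht, hq⟩ := R.dominance γ.length γ le_rfl μ hμ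
  rw [hq, inner_sum]
  apply Finset.sum_nonneg
  intro i _
  rw [real_inner_smul_right]
  apply mul_nonneg (ht i)
  rw [inner_eq_copair (R.sroot_ne_zero i)]
  have h1 : 0 < ⟪R.sroot i, R.sroot i⟫ := real_inner_self_pos' (R.sroot_ne_zero i)
  have h2 := hν i
  positivity

lemma fw_dominant (j : Fin R.l) : R.IsDominant (R.fw j) := by
  intro i
  rw [R.fw_pairing j i]
  split <;> norm_num

lemma domRep_norm (v : V) : ‖R.domRep v‖ = ‖v‖ := by
  rw [domRep]
  split
  · next h =>
      obtain ⟨w, _, hwv⟩ := h.choose_spec.2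
      rw [← hwv]
      exact w.norm_map v
  · rfl

end RootSystemCtx

/-- For an involution `s ∈ W` with `s(ϖ_i) ≠ ϖ_i` for every `i`, the set of all
`λ = Σ λ_i ϖ_i` with each `2λ_i` a positive integer and `‖2λ‖² ≤ ‖{μ − ρ} + ρ‖²`, where
`μ := {λ + s(λ)}`, is finite. -/
theorem statement6 {V : Type*} [NormedAddCommGroup V] [InnerProductSpace ℝ V]
    [FiniteDimensional ℝ V] (R : RootSystemCtx V)
    (s : V ≃ₗᵢ[ℝ] V) (hs : s ∈ R.weylGroup) (hinv : s * s = 1)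
    (hfix : ∀ i, s (R.fw i) ≠ R.fw i) :
    {lam : V |
      (∃ c : Fin R.l → ℝ, (∀ i, ∃ m : ℕ, 0 < m ∧ 2 * c i = (m : ℝ)) ∧
        lam = ∑ i, c i • R.fw i) ∧
      ‖(2 : ℝ) • lam‖ ^ 2 ≤
        ‖R.domRep (R.domRep (lam + s lam) - R.rho) + R.rho‖ ^ 2}.Finite := by
  classical
  by_cases hl0 : R.l = 0
  · apply Set.Finite.subset (Set.finite_singleton (0 : V))
    rintro lam ⟨⟨c, hc, rfl⟩, -⟩
    haveI : IsEmpty (Fin R.l) := by rw [hl0]; infer_instance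
    simp
  · have hlpos : 0 < R.l := Nat.pos_of_ne_zero hl0
    set K : ℝ := 2 * ‖R.rho‖ with hK
    have hK0 : 0 ≤ K := by positivity
    have hne : (Finset.univ : Finset (Fin R.l)).Nonempty := ⟨⟨0, hlpos⟩, Finset.mem_univ _⟩
    set ε : ℝ := Finset.univ.inf' hne (fun i => ‖R.fw i - s (R.fw i)‖ ^ 2 / 2) with hε
    have hεpos : 0 < ε := by
      rw [hε]
      rw [Finset.lt_inf'_iff]
      intro i _
      have h0 : R.fw i - s (R.fw i) ≠ 0 := sub_ne_zero.mpr (Ne.symm (hfix i))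
      have : 0 < ‖R.fw i - s (R.fw i)‖ := norm_pos_iff.mpr h0
      positivity
    have hεle : ∀ i, ε ≤ ‖R.fw i - s (R.fw i)‖ ^ 2 / 2 := fun i =>
      Finset.inf'_le _ (Finset.mem_univ i)
    set M : ℝ := Finset.univ.sup' hne (fun i => ‖R.fw i‖) with hM
    have hMle : ∀ i, ‖R.fw i‖ ≤ M := fun i => by
      rw [hM]; exact Finset.le_sup' (fun j => ‖R.fw j‖) (Finset.mem_univ i)
    have hM0 : 0 ≤ M := le_trans (norm_nonneg _) (hMle ⟨0, hlpos⟩)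
    set B : ℝ := (2 * K * M * R.l + K ^ 2 * R.l) / ε with hB
    set N : ℕ := ⌈2 * B⌉₊ with hN
    apply Set.Finite.subset
      (Set.Finite.image (fun m : Fin R.l → ℕ => ∑ i, ((m i : ℝ) / 2) • R.fw i)
        (Set.Finite.pi (fun _ : Fin R.l => Set.finite_Iic N)))
    rintro lam ⟨⟨c, hc, rfl⟩, hineq⟩
    choose m hm1 hm2 using hc
    set Λ : V := ∑ i, c i • R.fw i with hΛ
    clear_value K ε M B N Λ
    have hcpos : ∀ i, 0 < c i := by
      intro i
      have h1 : (1 : ℝ) ≤ (m i : ℝ) := by exact_mod_cast hm1 i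
      have := hm2 i
      linarith
    have hchalf : ∀ i, (1 : ℝ) / 2 ≤ c i := by
      intro i
      have h1 : (1 : ℝ) ≤ (m i : ℝ) := by exact_mod_cast hm1 i
      have := hm2 i
      linarith
    -- norm chain
    have hnorm1 : ‖R.domRep (Λ + s Λ)‖ = ‖Λ + s Λ‖ := R.domRep_norm _
    set μ : V := R.domRep (Λ + s Λ) with hμdef
    clear_value μ
    have hnorm2 : ‖R.domRep (μ - R.rho)‖ = ‖μ - R.rho‖ := R.domRep_norm _
    have hRHS : ‖R.domRep (μ - R.rho) + R.rho‖ ≤ ‖Λ + s Λ‖ + K := by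
      have h1 := norm_add_le (R.domRep (μ - R.rho)) R.rho
      have h2 := norm_sub_le μ R.rho
      rw [hnorm2] at h1
      rw [hK, ← hnorm1]
      linarith
    have hineq2 : ‖(2 : ℝ) • Λ‖ ^ 2 ≤ (‖Λ + s Λ‖ + K) ^ 2 :=
      le_trans hineq (pow_le_pow_left₀ (norm_nonneg _) hRHS 2)
    have hA : ‖Λ + s Λ‖ ^ 2 = 2 * ‖Λ‖ ^ 2 + 2 * ⟪Λ, s Λ⟫ := by
      rw [norm_add_sq_real, s.norm_map]; ring
    have hD : ‖Λ - s Λ‖ ^ 2 = 2 * ‖Λ‖ ^ 2 - 2 * ⟪Λ, s Λ⟫ := by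
      rw [norm_sub_sq_real, s.norm_map]; ring
    have h2Λ : ‖(2 : ℝ) • Λ‖ = 2 * ‖Λ‖ := by
      rw [norm_smul]; simp
    rw [h2Λ] at hineq2
    have hAle : ‖Λ + s Λ‖ ≤ 2 * ‖Λ‖ := by
      nlinarith [norm_nonneg (Λ + s Λ), norm_nonneg Λ, norm_nonneg (Λ - s Λ), hA, hD,
        sq_nonneg (‖Λ - s Λ‖)]
    have hDbound : ‖Λ - s Λ‖ ^ 2 ≤ 4 * K * ‖Λ‖ + K ^ 2 := by
      nlinarith [hineq2, hA, hD, mul_le_mul_of_nonneg_right hAle hK0]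
    -- lower bound on ‖Λ - s Λ‖²
    have hterm : ∀ i, ε ≤ ⟪R.fw i, R.fw i - s (R.fw i)⟫ := by
      intro i
      have hn : ‖s (R.fw i)‖ = ‖R.fw i‖ := s.norm_map _
      have h1 : ⟪R.fw i, R.fw i - s (R.fw i)⟫ = ‖R.fw i - s (R.fw i)‖ ^ 2 / 2 := by
        rw [inner_sub_right, real_inner_self_eq_norm_sq, norm_sub_sq_real, hn]; ring
      rw [h1]
      exact hεle i
    have hcross : ∀ i j, 0 ≤ ⟪R.fw j, R.fw i - s (R.fw i)⟫ := fun i j =>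
      R.inner_sub_orbit_nonneg hs (R.fw_dominant i) (R.fw_dominant j)
    have hinnerlow : ∀ i, c i * ε ≤ ⟪Λ, R.fw i - s (R.fw i)⟫ := by
      intro i
      have hexp : ⟪Λ, R.fw i - s (R.fw i)⟫
          = ∑ j, c j * ⟪R.fw j, R.fw i - s (R.fw i)⟫ := by
        rw [hΛ, sum_inner]
        exact Finset.sum_congr rfl fun j _ => real_inner_smul_left _ _ _
      rw [hexp]
      calc c i * ε ≤ c i * ⟪R.fw i, R.fw i - s (R.fw i)⟫ :=
            mul_le_mul_of_nonneg_left (hterm i) (hcpos i).le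
        _ ≤ ∑ j, c j * ⟪R.fw j, R.fw i - s (R.fw i)⟫ :=
            Finset.single_le_sum
              (f := fun j => c j * ⟪R.fw j, R.fw i - s (R.fw i)⟫)
              (fun j _ => mul_nonneg (hcpos j).le (hcross i j)) (Finset.mem_univ i)
    have hsl : Λ - s Λ = ∑ i, c i • (R.fw i - s (R.fw i)) := by
      rw [hΛ, map_sum, ← Finset.sum_sub_distrib]
      refine Finset.sum_congr rfl fun i _ => ?_
      rw [LinearIsometryEquiv.map_smul, smul_sub]
    have hDlow : 2 * ε * (∑ i, c i ^ 2) ≤ ‖Λ - s Λ‖ ^ 2 := by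
      have hexp2 : ⟪Λ, Λ - s Λ⟫ = ∑ i, c i * ⟪Λ, R.fw i - s (R.fw i)⟫ := by
        rw [hsl, inner_sum]
        exact Finset.sum_congr rfl fun i _ => real_inner_smul_right _ _ _
      have hDD : ‖Λ - s Λ‖ ^ 2 = 2 * ⟪Λ, Λ - s Λ⟫ := by
        rw [hD, inner_sub_right, real_inner_self_eq_norm_sq]; ring
      rw [hDD, hexp2]
      have hstep : ∑ i, c i * (c i * ε) ≤ ∑ i, c i * ⟪Λ, R.fw i - s (R.fw i)⟫ :=
        Finset.sum_le_sum fun i _ =>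
          mul_le_mul_of_nonneg_left (hinnerlow i) (hcpos i).le
      have hrw : 2 * ε * (∑ i, c i ^ 2) = 2 * ∑ i, c i * (c i * ε) := by
        rw [Finset.mul_sum, Finset.mul_sum]
        refine Finset.sum_congr rfl fun i _ => ?_
        ring
      rw [hrw]
      linarith
    set S : ℝ := ∑ i, c i with hS
    have hSpos : 0 < S := by
      rw [hS]; exact Finset.sum_pos (fun i _ => hcpos i) hne
    have hLle : ‖Λ‖ ≤ M * S := by
      calc ‖Λ‖ ≤ ∑ i, ‖c i • R.fw i‖ := by rw [hΛ]; exact norm_sum_le _ _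
        _ = ∑ i, c i * ‖R.fw i‖ := by
            refine Finset.sum_congr rfl fun i _ => ?_
            rw [norm_smul, Real.norm_eq_abs, abs_of_pos (hcpos i)]
        _ ≤ ∑ i, c i * M :=
            Finset.sum_le_sum fun i _ => mul_le_mul_of_nonneg_left (hMle i) (hcpos i).le
        _ = M * S := by rw [hS, ← Finset.sum_mul]; ring
    have hCS : S ^ 2 ≤ (R.l : ℝ) * ∑ i, c i ^ 2 := by
      rw [hS]
      have h := sq_sum_le_card_mul_sum_sq (s := (Finset.univ : Finset (Fin R.l))) (f := c)
      simpa using h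
    have hlR : (0 : ℝ) < (R.l : ℝ) := by exact_mod_cast hlpos
    have hShalf : (1 : ℝ) / 2 ≤ S := by
      have h1 : c ⟨0, hlpos⟩ ≤ S := by
        rw [hS]
        exact Finset.single_le_sum (f := c) (fun j _ => (hcpos j).le) (Finset.mem_univ _)
      linarith [hchalf ⟨0, hlpos⟩]
    have hSB : S ≤ B := by
      have h1 : ‖Λ - s Λ‖ ^ 2 ≤ 4 * K * (M * S) + K ^ 2 := by
        have h1a : (0 : ℝ) ≤ 4 * K := by linarith
        linarith [mul_le_mul_of_nonneg_left hLle h1a]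
      have h2 : 2 * ε * S ^ 2 ≤ (R.l : ℝ) * (4 * K * (M * S) + K ^ 2) := by
        have h3 : 2 * ε * S ^ 2 ≤ 2 * ε * ((R.l : ℝ) * ∑ i, c i ^ 2) := by
          have h3a : (0 : ℝ) ≤ 2 * ε := by linarith
          linarith [mul_le_mul_of_nonneg_left hCS h3a]
        have h4 : 2 * ε * ((R.l : ℝ) * ∑ i, c i ^ 2)
            = (R.l : ℝ) * (2 * ε * ∑ i, c i ^ 2) := by ring
        have h5 : (R.l : ℝ) * (2 * ε * ∑ i, c i ^ 2)
            ≤ (R.l : ℝ) * (4 * K * (M * S) + K ^ 2) :=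
          mul_le_mul_of_nonneg_left (le_trans hDlow h1) hlR.le
        linarith
      have h6 : K ^ 2 * (R.l : ℝ) ≤ 2 * K ^ 2 * (R.l : ℝ) * S := by
        have h6a : (0 : ℝ) ≤ 2 * K ^ 2 * (R.l : ℝ) := by positivity
        linarith [mul_le_mul_of_nonneg_left hShalf h6a]
      have h7 : 2 * ε * S * S ≤ (4 * K * M * (R.l : ℝ) + 2 * K ^ 2 * (R.l : ℝ)) * S := by
        linarith [h2, h6]
      have h8 : 2 * ε * S ≤ 4 * K * M * (R.l : ℝ) + 2 * K ^ 2 * (R.l : ℝ) :=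
        le_of_mul_le_mul_right h7 hSpos
      rw [hB, le_div_iff₀ hεpos]
      linarith
    refine ⟨m, ?_, ?_⟩
    · intro i _
      simp only [Set.mem_Iic]
      have hciS : c i ≤ S := by
        rw [hS]
        exact Finset.single_le_sum (f := c) (fun j _ => (hcpos j).le) (Finset.mem_univ i)
      have hmr : (m i : ℝ) ≤ 2 * B := by
        have := hm2 i
        linarith
      have hceil : (2 * B : ℝ) ≤ (N : ℝ) := by
        rw [hN]
        exact Nat.le_ceil _
      have : (m i : ℝ) ≤ (N : ℝ) := le_trans hmr hceil
      exact_mod_cast this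
    · rw [hΛ]
      refine Finset.sum_congr rfl fun i _ => ?_
      have : (m i : ℝ) / 2 = c i := by
        have := hm2 i
        linarith
      rw [this]
end
end
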